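/- Fix integers n ≥ 1 and m ≥ 1 and let t_p ≥ 0 be a nonnegative real number for each string p on n sites. Then Σ_{r full string} (Σ_{p ⊳ r} m^{|p|} t_p)² ≤ (m+1)^n · m^n · Σ_p t_p². -/

import Mathlib

/-- A string `q` is covered by the full string `P` iff `q` agrees with `P` on its support. -/
def covers {n m : ℕ} (q : Fin n → Option (Fin m)) (P : Fin n → Fin m) : Prop :=
  ∀ i : Fin n, q i ≠ none → q i = some (P i)

instance {n m : ℕ} (q : Fin n → Option (Fin m)) : DecidablePred (covers q) :=
  fun P => inferInstanceAs (Decidable (∀ i : Fin n, q i ≠ none → q i = some (P i)))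

/-- The weight of a string: the cardinality of its support. -/
def wt {n m : ℕ} (q : Fin n → Option (Fin m)) : ℕ :=
  (Finset.univ.filter (fun i : Fin n => q i ≠ none)).card

open Finset

lemma wt_pow_eq_prod {n m : ℕ} (p : Fin n → Option (Fin m)) :
    (m : ℝ) ^ wt p = ∏ i : Fin n, (if p i ≠ none then (m : ℝ) else 1) := by
  classical
  rw [← Finset.prod_filter, Finset.prod_const, wt]

lemma sum_pow_wt {n m : ℕ} (r : Fin n → Fin m) :
    ∑ p ∈ Finset.univ.filter (fun p : Fin n → Option (Fin m) => covers p r),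
      (m : ℝ) ^ wt p = ((m : ℝ) + 1) ^ n := by
  classical
  have hset : Finset.univ.filter (fun p : Fin n → Option (Fin m) => covers p r)
      = Fintype.piFinset (fun i => ({none, some (r i)} : Finset (Option (Fin m)))) := by
    ext p
    simp only [Finset.mem_filter, Finset.mem_univ, true_and, Fintype.mem_piFinset, mem_insert,
      mem_singleton]
    unfold covers
    constructor
    · intro h i
      rcases hpi : p i with _ | a
      · exact Or.inl rfl
      · right; have := h i (by simp [hpi]); rw [hpi] at this; exact this
    · intro h i hi
      rcases h i with h' | h'
      · exact absurd h' hi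
      · exact h'
  rw [hset]
  simp_rw [wt_pow_eq_prod]
  have hps := Finset.prod_univ_sum (fun i : Fin n => ({none, some (r i)} : Finset (Option (Fin m))))
    (fun _ j => if j ≠ none then (m : ℝ) else 1)
  rw [← hps]
  have h1 : ∀ i : Fin n, ∑ j ∈ ({none, some (r i)} : Finset (Option (Fin m))),
      (if j ≠ none then (m : ℝ) else 1) = (m : ℝ) + 1 := by
    intro i
    rw [Finset.sum_pair (by simp)]
    simp [add_comm]
  simp [h1, add_comm]

lemma card_covering {n m : ℕ} (p : Fin n → Option (Fin m)) :
    ((Finset.univ.filter (fun r : Fin n → Fin m => covers p r)).card : ℝ) * (m : ℝ) ^ wt p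
      = (m : ℝ) ^ n := by
  classical
  have hset : Finset.univ.filter (fun r : Fin n → Fin m => covers p r)
      = Fintype.piFinset (fun i => (p i).elim Finset.univ (fun a => {a})) := by
    ext r
    simp only [Finset.mem_filter, Finset.mem_univ, true_and, Fintype.mem_piFinset]
    unfold covers
    constructor
    · intro h i
      rcases hpi : p i with _ | a
      · simp
      · have := h i (by simp [hpi]); rw [hpi] at this
        simp only [Option.some.injEq] at this
        simp [this]
    · intro h i hi
      rcases hpi : p i with _ | a
      · exact absurd hpi hi
      · have := h i; rw [hpi] at this
        simp only [Option.elim, Finset.mem_singleton] at this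
        rw [this]
  rw [hset, Fintype.card_piFinset]
  have hcard : ∀ i : Fin n, ((p i).elim Finset.univ (fun a => ({a} : Finset (Fin m)))).card
      = if p i ≠ none then 1 else m := by
    intro i
    rcases hpi : p i with _ | a <;> simp [hpi]
  simp_rw [hcard]
  push_cast
  rw [Finset.prod_ite, Finset.prod_const, Finset.prod_const, one_pow, one_mul,
    wt_pow_eq_prod, Finset.prod_ite, Finset.prod_const, Finset.prod_const, one_pow, mul_one,
    ← pow_add]
  congr 1
  rw [Finset.filter_not, Finset.card_sdiff_of_subset (Finset.filter_subset _ _), Finset.card_univ,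
    Fintype.card_fin]
  have hle : (Finset.univ.filter (fun i : Fin n => p i ≠ none)).card ≤ n := by
    simpa using Finset.card_filter_le Finset.univ (fun i : Fin n => p i ≠ none)
  omega

theorem stmt_5 (n m : ℕ) (hn : 1 ≤ n) (hm : 1 ≤ m)
    (t : (Fin n → Option (Fin m)) → ℝ) (ht : ∀ p, 0 ≤ t p) :
    ∑ r : Fin n → Fin m,
        (∑ p ∈ Finset.univ.filter (fun p : Fin n → Option (Fin m) => covers p r),
          (m : ℝ) ^ wt p * t p) ^ 2 ≤
      ((m : ℝ) + 1) ^ n * (m : ℝ) ^ n * ∑ p : Fin n → Option (Fin m), t p ^ 2 := by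
  classical
  have hmpos : (0:ℝ) ≤ (m : ℝ) := by positivity
  have key : ∀ r : Fin n → Fin m,
      (∑ p ∈ Finset.univ.filter (fun p : Fin n → Option (Fin m) => covers p r),
          (m : ℝ) ^ wt p * t p) ^ 2
        ≤ ((m : ℝ) + 1) ^ n *
          ∑ p ∈ Finset.univ.filter (fun p : Fin n → Option (Fin m) => covers p r),
            (m : ℝ) ^ wt p * t p ^ 2 := by
    intro r
    have hCS := Finset.sum_mul_sq_le_sq_mul_sq
      (Finset.univ.filter (fun p : Fin n → Option (Fin m) => covers p r))
      (fun p => Real.sqrt ((m : ℝ) ^ wt p))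
      (fun p => Real.sqrt ((m : ℝ) ^ wt p) * t p)
    have heq1 : ∀ p : Fin n → Option (Fin m),
        Real.sqrt ((m : ℝ) ^ wt p) * (Real.sqrt ((m : ℝ) ^ wt p) * t p)
          = (m : ℝ) ^ wt p * t p := by
      intro p
      rw [← mul_assoc, Real.mul_self_sqrt (by positivity)]
    have heq2 : ∀ p : Fin n → Option (Fin m),
        Real.sqrt ((m : ℝ) ^ wt p) ^ 2 = (m : ℝ) ^ wt p := by
      intro p; rw [Real.sq_sqrt (by positivity)]
    have heq3 : ∀ p : Fin n → Option (Fin m),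
        (Real.sqrt ((m : ℝ) ^ wt p) * t p) ^ 2 = (m : ℝ) ^ wt p * t p ^ 2 := by
      intro p; rw [mul_pow, heq2]
    simp_rw [heq1, heq2, heq3] at hCS
    rwa [sum_pow_wt r] at hCS
  calc ∑ r : Fin n → Fin m,
        (∑ p ∈ Finset.univ.filter (fun p : Fin n → Option (Fin m) => covers p r),
          (m : ℝ) ^ wt p * t p) ^ 2
      ≤ ∑ r : Fin n → Fin m, ((m : ℝ) + 1) ^ n *
          ∑ p ∈ Finset.univ.filter (fun p : Fin n → Option (Fin m) => covers p r),
            (m : ℝ) ^ wt p * t p ^ 2 := Finset.sum_le_sum (fun r _ => key r)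
    _ = ((m : ℝ) + 1) ^ n * ∑ r : Fin n → Fin m,
          ∑ p ∈ Finset.univ.filter (fun p : Fin n → Option (Fin m) => covers p r),
            (m : ℝ) ^ wt p * t p ^ 2 := by rw [← Finset.mul_sum]
    _ = ((m : ℝ) + 1) ^ n * (m : ℝ) ^ n * ∑ p : Fin n → Option (Fin m), t p ^ 2 := by
        rw [mul_assoc]
        congr 1
        have hswap : ∑ r : Fin n → Fin m,
            ∑ p ∈ Finset.univ.filter (fun p : Fin n → Option (Fin m) => covers p r),
              (m : ℝ) ^ wt p * t p ^ 2
            = ∑ p : Fin n → Option (Fin m),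
              ((Finset.univ.filter (fun r : Fin n → Fin m => covers p r)).card : ℝ) *
                ((m : ℝ) ^ wt p * t p ^ 2) := by
          simp_rw [Finset.sum_filter]
          rw [Finset.sum_comm]
          congr 1; ext p
          rw [← Finset.sum_filter, Finset.sum_const, nsmul_eq_mul]
        rw [hswap, Finset.mul_sum]
        congr 1; ext p
        rw [← mul_assoc, card_covering p]
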